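/- Integration by parts for functions vanishing on the lower boundary (Proposition 3 of the paper). Let μ and ν be finite signed Borel measures on [0,1]^d (take a = (0,…,0) and b = 1 = (1,…,1)), and assume that ν(E) = 0 for every Borel set E ⊆ [0,1]^d \ (0,1]^d (equivalently, f_ν(u) = 0 whenever u_j = 0 for some j). Set f = f_μ and g = f_ν. Then ∫_{(0,1]^d} f dν = Σ_{I ⊆ {1,…,d}} (−1)^{|I|} ∫_{(0_I, 1_I]} g(x_I−; 1_{−I}) dμ_{I,1}(x_I), where (0_I, 1_I] = ∏_{j∈I} (0,1], μ_{I,1} is the projection measure of μ at c = 1 = (1,…,1), and the term for I = ∅ is interpreted as f(1,…,1) · g(1,…,1). -/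

import Mathlib

open MeasureTheory Set

/-- Integral of a bounded Borel function against a finite signed measure, over a set,
defined via the Jordan decomposition. -/
noncomputable def sInt {α : Type*} [MeasurableSpace α]
    (lam : MeasureTheory.SignedMeasure α) (s : Set α) (h : α → ℝ) : ℝ :=
  (∫ x in s, h x ∂lam.toJordanDecomposition.posPart) -
    ∫ x in s, h x ∂lam.toJordanDecomposition.negPart

section Aux

variable {α : Type*} [MeasurableSpace α]

lemma signed_apply (σ : SignedMeasure α) {E : Set α} (hE : MeasurableSet E) :
    σ E = (σ.toJordanDecomposition.posPart E).toReal -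
      (σ.toJordanDecomposition.negPart E).toReal := by
  conv_lhs => rw [← σ.toSignedMeasure_toJordanDecomposition]
  rw [JordanDecomposition.toSignedMeasure, Measure.toSignedMeasure_sub_apply hE]
  rfl

lemma jordan_null (σ : SignedMeasure α) {T : Set α} (hT : MeasurableSet T)
    (h : ∀ E, MeasurableSet E → E ⊆ T → σ E = 0) :
    σ.toJordanDecomposition.posPart T = 0 ∧ σ.toJordanDecomposition.negPart T = 0 := by
  obtain ⟨t, ht, htp, htm⟩ := σ.toJordanDecomposition.mutuallySingular
  set P := σ.toJordanDecomposition.posPart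
  set N := σ.toJordanDecomposition.negPart
  have h1 : N (T \ t) = 0 :=
    measure_mono_null (diff_subset_compl T t) htm
  have h2 : P (T ∩ t) = 0 :=
    measure_mono_null inter_subset_right htp
  have h3 : P (T \ t) = 0 := by
    have hs := signed_apply σ (hT.diff ht)
    rw [h (T \ t) (hT.diff ht) diff_subset, h1, ENNReal.toReal_zero, sub_zero] at hs
    exact ((ENNReal.toReal_eq_zero_iff _).1 hs.symm).resolve_right (measure_ne_top _ _)
  have h4 : N (T ∩ t) = 0 := by
    have hs := signed_apply σ (hT.inter ht)
    rw [h (T ∩ t) (hT.inter ht) inter_subset_left, h2, ENNReal.toReal_zero, zero_sub,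
      eq_comm, neg_eq_zero] at hs
    exact ((ENNReal.toReal_eq_zero_iff _).1 hs).resolve_right (measure_ne_top _ _)
  constructor
  · have := measure_union_le (μ := P) (T ∩ t) (T \ t)
    rw [inter_union_diff, h2, h3] at this
    simpa using this
  · have := measure_union_le (μ := N) (T ∩ t) (T \ t)
    rw [inter_union_diff, h4, h1] at this
    simpa using this

/-- Fubini plus integrability for section measures. -/
lemma setint (P Q : Measure α) [IsFiniteMeasure P] [IsFiniteMeasure Q]
    {s : Set α} (hs : MeasurableSet s) (T : α → Set α)
    (hm : MeasurableSet {p : α × α | p.1 ∈ s ∧ p.2 ∈ T p.1}) :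
    IntegrableOn (fun y => (Q (T y)).toReal) s P ∧
    ∫ y in s, (Q (T y)).toReal ∂P
      = ((P.prod Q) {p : α × α | p.1 ∈ s ∧ p.2 ∈ T p.1}).toReal := by
  set A : Set (α × α) := {p : α × α | p.1 ∈ s ∧ p.2 ∈ T p.1} with hA
  have hsec : ∀ y, (Q (Prod.mk y ⁻¹' A)).toReal
      = s.indicator (fun y => (Q (T y)).toReal) y := by
    intro y
    by_cases hy : y ∈ s
    · rw [indicator_of_mem hy]
      have : Prod.mk y ⁻¹' A = T y := by ext z; simp [hA, hy]
      rw [this]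
    · rw [indicator_of_notMem hy]
      have : Prod.mk y ⁻¹' A = ∅ := by ext z; simp [hA, hy]
      rw [this]; simp
  have hmeas : Measurable fun y => Q (Prod.mk y ⁻¹' A) :=
    measurable_measure_prodMk_left hm
  have hint : Integrable (fun y => (Q (Prod.mk y ⁻¹' A)).toReal) P := by
    refine ⟨hmeas.ennreal_toReal.aestronglyMeasurable,
      HasFiniteIntegral.of_bounded (C := (Q univ).toReal) (ae_of_all _ fun y => ?_)⟩
    rw [Real.norm_eq_abs, abs_of_nonneg ENNReal.toReal_nonneg]
    exact ENNReal.toReal_mono (measure_ne_top _ _) (measure_mono (subset_univ _))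
  have hindint : Integrable (s.indicator fun y => (Q (T y)).toReal) P :=
    hint.congr (ae_of_all _ hsec)
  refine ⟨(integrable_indicator_iff hs).1 hindint, ?_⟩
  rw [← integral_indicator hs,
    show s.indicator (fun y => (Q (T y)).toReal) = fun y => (Q (Prod.mk y ⁻¹' A)).toReal
      from funext fun y => (hsec y).symm,
    Measure.prod_apply hm]
  exact integral_toReal hmeas.aemeasurable (ae_of_all _ fun y => measure_lt_top Q _)

end Aux

def Sd (d : ℕ) : Set (Fin d → ℝ) := {y | ∀ j, y j ∈ Ioc (0:ℝ) 1}
def SI {d : ℕ} (I : Finset (Fin d)) : Set (Fin d → ℝ) :=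
  {y | (∀ j ∈ I, y j ∈ Ioc (0:ℝ) 1) ∧ ∀ j ∉ I, y j ≤ 1}
def TI {d : ℕ} (I : Finset (Fin d)) (y : Fin d → ℝ) : Set (Fin d → ℝ) :=
  {z | (∀ j ∈ I, z j < y j) ∧ ∀ j ∉ I, z j ≤ 1}
def Ad (d : ℕ) : Set ((Fin d → ℝ) × (Fin d → ℝ)) :=
  {p | p.1 ∈ Sd d ∧ p.2 ∈ Icc 0 p.1}
def Bd {d : ℕ} (I : Finset (Fin d)) : Set ((Fin d → ℝ) × (Fin d → ℝ)) :=
  {p | p.1 ∈ SI I ∧ p.2 ∈ TI I p.1}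

variable {d : ℕ}

lemma mS : MeasurableSet (Sd d) := by
  have : Sd d = ⋂ j, (fun y : Fin d → ℝ => y j) ⁻¹' Ioc 0 1 := by ext y; simp [Sd]
  rw [this]
  exact MeasurableSet.iInter fun j => (measurable_pi_apply j) measurableSet_Ioc

lemma mK : MeasurableSet (Icc (0 : Fin d → ℝ) 1) := measurableSet_Icc

lemma mSI (I : Finset (Fin d)) : MeasurableSet (SI I) := by
  have : SI I = (⋂ j, ⋂ (_ : j ∈ I), (fun y : Fin d → ℝ => y j) ⁻¹' Ioc 0 1) ∩
      ⋂ j, ⋂ (_ : j ∉ I), (fun y : Fin d → ℝ => y j) ⁻¹' Iic 1 := by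
    ext y; simp [SI]
  rw [this]
  exact (MeasurableSet.iInter fun j => MeasurableSet.iInter fun _ =>
      (measurable_pi_apply j) measurableSet_Ioc).inter
    (MeasurableSet.iInter fun j => MeasurableSet.iInter fun _ =>
      (measurable_pi_apply j) measurableSet_Iic)

lemma mTI (I : Finset (Fin d)) (y : Fin d → ℝ) : MeasurableSet (TI I y) := by
  have : TI I y = (⋂ j, ⋂ (_ : j ∈ I), (fun z : Fin d → ℝ => z j) ⁻¹' Iio (y j)) ∩
      ⋂ j, ⋂ (_ : j ∉ I), (fun z : Fin d → ℝ => z j) ⁻¹' Iic 1 := by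
    ext z; simp [TI]
  rw [this]
  exact (MeasurableSet.iInter fun j => MeasurableSet.iInter fun _ =>
      (measurable_pi_apply j) measurableSet_Iio).inter
    (MeasurableSet.iInter fun j => MeasurableSet.iInter fun _ =>
      (measurable_pi_apply j) measurableSet_Iic)

lemma mfst (j : Fin d) :
    Measurable fun p : (Fin d → ℝ) × (Fin d → ℝ) => p.1 j :=
  (measurable_pi_apply j).comp measurable_fst

lemma msnd (j : Fin d) :
    Measurable fun p : (Fin d → ℝ) × (Fin d → ℝ) => p.2 j :=
  (measurable_pi_apply j).comp measurable_snd

lemma mA : MeasurableSet (Ad d) := by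
  have : Ad d = (Prod.fst ⁻¹' Sd d) ∩
      ((⋂ j, {p : (Fin d → ℝ) × (Fin d → ℝ) | 0 ≤ p.2 j}) ∩
        ⋂ j, {p : (Fin d → ℝ) × (Fin d → ℝ) | p.2 j ≤ p.1 j}) := by
    ext p
    simp only [Ad, mem_setOf_eq, mem_inter_iff, mem_preimage, mem_iInter, mem_Icc, Pi.le_def]
    constructor
    · rintro ⟨h1, h2, h3⟩; exact ⟨h1, fun j => by simpa using h2 j, fun j => h3 j⟩
    · rintro ⟨h1, h2, h3⟩; exact ⟨h1, fun j => by simpa using h2 j, fun j => h3 j⟩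
  rw [this]
  exact (mS.preimage measurable_fst).inter
    ((MeasurableSet.iInter fun j => measurableSet_le measurable_const (msnd j)).inter
      (MeasurableSet.iInter fun j => measurableSet_le (msnd j) (mfst j)))

lemma mB (I : Finset (Fin d)) : MeasurableSet (Bd I) := by
  have : Bd I = (Prod.fst ⁻¹' SI I) ∩
      ((⋂ j, ⋂ (_ : j ∈ I), {p : (Fin d → ℝ) × (Fin d → ℝ) | p.2 j < p.1 j}) ∩
        ⋂ j, ⋂ (_ : j ∉ I), {p : (Fin d → ℝ) × (Fin d → ℝ) | p.2 j ≤ 1}) := by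
    ext p
    simp only [Bd, TI, mem_setOf_eq, mem_inter_iff, mem_preimage, mem_iInter]
  rw [this]
  exact ((mSI I).preimage measurable_fst).inter
    ((MeasurableSet.iInter fun j => MeasurableSet.iInter fun _ =>
        measurableSet_lt (msnd j) (mfst j)).inter
      (MeasurableSet.iInter fun j => MeasurableSet.iInter fun _ =>
        measurableSet_le (msnd j) measurable_const))
lemma core (P Q : Measure (Fin d → ℝ)) [IsFiniteMeasure P] [IsFiniteMeasure Q]
    (hP : P (Icc (0 : Fin d → ℝ) 1)ᶜ = 0) (hQ : Q (Sd d)ᶜ = 0) :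
    ((Q.prod P) (Ad d)).toReal
      = ∑ I : Finset (Fin d), (-1:ℝ)^I.card * ((P.prod Q) (Bd I)).toReal := by
  classical
  set π := P.prod Q with hπ
  set C : Set ((Fin d → ℝ) × (Fin d → ℝ)) := Icc (0 : Fin d → ℝ) 1 ×ˢ Sd d with hC
  have mC : MeasurableSet C := mK.prod mS
  -- π is concentrated on C
  have hnull : π Cᶜ = 0 := by
    have hsub : Cᶜ ⊆ ((Icc (0 : Fin d → ℝ) 1)ᶜ ×ˢ univ) ∪ (univ ×ˢ (Sd d)ᶜ) := by
      intro p hp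
      rw [mem_compl_iff, hC, mem_prod] at hp
      by_cases h1 : p.1 ∈ Icc (0 : Fin d → ℝ) 1
      · exact Or.inr (mem_prod.2 ⟨mem_univ _, fun h2 => hp ⟨h1, h2⟩⟩)
      · exact Or.inl (mem_prod.2 ⟨h1, mem_univ _⟩)
    refine measure_mono_null hsub (measure_union_null ?_ ?_)
    · rw [hπ, Measure.prod_prod, hP, zero_mul]
    · rw [hπ, Measure.prod_prod, hQ, mul_zero]
  have hconc : ∀ E : Set ((Fin d → ℝ) × (Fin d → ℝ)), π E = π (E ∩ C) := by
    intro E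
    have h1 := measure_inter_add_diff (μ := π) E mC
    have h2 : π (E \ C) = 0 := measure_mono_null (diff_subset_compl E C) hnull
    rw [← h1, h2, add_zero]
  -- swap
  have hswap : (Q.prod P) (Ad d) = π (Prod.swap ⁻¹' Ad d) := by
    rw [hπ, ← Measure.prod_swap, Measure.map_apply measurable_swap mA]
  -- the trimmed sets
  set A2 : Set ((Fin d → ℝ) × (Fin d → ℝ)) := {p | p ∈ C ∧ ∀ j, p.1 j ≤ p.2 j} with hA2
  set B2 : Finset (Fin d) → Set ((Fin d → ℝ) × (Fin d → ℝ)) :=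
    fun I => {p | p ∈ C ∧ ∀ j ∈ I, p.2 j < p.1 j} with hB2def
  have hA2eq : (Prod.swap ⁻¹' Ad d) ∩ C = A2 := by
    ext p
    constructor
    · rintro ⟨hmem, hpc⟩
      obtain ⟨h1, h2⟩ : p.2 ∈ Sd d ∧ p.1 ∈ Icc 0 p.2 := hmem
      exact ⟨hpc, fun j => Pi.le_def.1 (mem_Icc.1 h2).2 j⟩
    · rintro ⟨hpc, hle⟩
      have h1 : p.1 ∈ Icc (0 : Fin d → ℝ) 1 := (mem_prod.1 hpc).1
      have h2 : p.2 ∈ Sd d := (mem_prod.1 hpc).2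
      exact ⟨⟨h2, mem_Icc.2 ⟨(mem_Icc.1 h1).1, Pi.le_def.2 hle⟩⟩, hpc⟩
  have hB2eq : ∀ I : Finset (Fin d), Bd I ∩ C = B2 I := by
    intro I
    ext p
    constructor
    · rintro ⟨⟨hy, hz⟩, hpc⟩
      exact ⟨hpc, hz.1⟩
    · rintro ⟨hpc, hzlt⟩
      have h1 : p.1 ∈ Icc (0 : Fin d → ℝ) 1 := (mem_prod.1 hpc).1
      have h2 : p.2 ∈ Sd d := (mem_prod.1 hpc).2
      have hle1 : ∀ j, p.1 j ≤ 1 := Pi.le_def.1 (mem_Icc.1 h1).2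
      refine ⟨⟨⟨fun j hj => ⟨lt_trans (h2 j).1 (hzlt j hj), hle1 j⟩,
        fun j _ => hle1 j⟩, hzlt, fun j _ => (h2 j).2⟩, hpc⟩
  have mA2 : MeasurableSet A2 := by
    have : A2 = C ∩ ⋂ j, {p : (Fin d → ℝ) × (Fin d → ℝ) | p.1 j ≤ p.2 j} := by
      ext p; simp only [hA2, mem_setOf_eq, mem_inter_iff, mem_iInter]
    rw [this]
    exact mC.inter (MeasurableSet.iInter fun j => measurableSet_le (mfst j) (msnd j))
  have mB2 : ∀ I : Finset (Fin d), MeasurableSet (B2 I) := by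
    intro I
    have : B2 I = C ∩ ⋂ j, ⋂ (_ : j ∈ I),
        {p : (Fin d → ℝ) × (Fin d → ℝ) | p.2 j < p.1 j} := by
      ext p; simp only [hB2def, mem_setOf_eq, mem_inter_iff, mem_iInter]
    rw [this]
    exact mC.inter (MeasurableSet.iInter fun j => MeasurableSet.iInter fun _ =>
      measurableSet_lt (msnd j) (mfst j))
  -- pointwise inclusion-exclusion of indicators
  have key : ∀ p : (Fin d → ℝ) × (Fin d → ℝ),
      A2.indicator (1 : (Fin d → ℝ) × (Fin d → ℝ) → ℝ) p
        = ∑ I : Finset (Fin d), (-1:ℝ)^I.card * (B2 I).indicator (1 : (Fin d → ℝ) × (Fin d → ℝ) → ℝ) p := by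
    intro p
    by_cases hpC : p ∈ C
    · have hprod : ∀ t : Finset (Fin d),
          (∏ j ∈ t, (if p.2 j < p.1 j then (1:ℝ) else 0))
            = if ∀ j ∈ t, p.2 j < p.1 j then 1 else 0 := by
        intro t
        by_cases h : ∀ j ∈ t, p.2 j < p.1 j
        · rw [if_pos h, Finset.prod_eq_one]
          intro j hj; rw [if_pos (h j hj)]
        · rw [if_neg h]
          push_neg at h; obtain ⟨j, hjt, hj⟩ := h
          exact Finset.prod_eq_zero hjt (by rw [if_neg (not_lt.2 hj)])
      have lhs_eq : A2.indicator (1 : (Fin d → ℝ) × (Fin d → ℝ) → ℝ) p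
          = ∏ j : Fin d, ((1:ℝ) - if p.2 j < p.1 j then 1 else 0) := by
        by_cases h : ∀ j, p.1 j ≤ p.2 j
        · rw [indicator_of_mem (show p ∈ A2 from ⟨hpC, h⟩), Pi.one_apply, eq_comm,
            Finset.prod_eq_one]
          intro j _; rw [if_neg (not_lt.2 (h j))]; ring
        · push_neg at h; obtain ⟨j, hj⟩ := h
          rw [indicator_of_notMem (fun hmem => absurd (hmem.2 j) (not_le.2 hj)), eq_comm]
          exact Finset.prod_eq_zero (Finset.mem_univ j) (by rw [if_pos hj]; ring)
      rw [lhs_eq]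
      have expand : ∏ j : Fin d, ((1:ℝ) - if p.2 j < p.1 j then 1 else 0)
          = ∑ I ∈ Finset.univ.powerset,
              (-1:ℝ)^I.card * ∏ j ∈ I, (if p.2 j < p.1 j then (1:ℝ) else 0) := by
        have h1 : ∀ j : Fin d, ((1:ℝ) - if p.2 j < p.1 j then 1 else 0)
            = (-(if p.2 j < p.1 j then (1:ℝ) else 0)) + 1 := fun j => by ring
        simp_rw [h1]
        rw [Finset.prod_add]
        refine Finset.sum_congr rfl fun I _ => ?_
        rw [Finset.prod_const_one, mul_one,
          show (∏ j ∈ I, -(if p.2 j < p.1 j then (1:ℝ) else 0))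
              = ∏ j ∈ I, ((-1) * (if p.2 j < p.1 j then (1:ℝ) else 0)) from
            Finset.prod_congr rfl fun j _ => by ring,
          Finset.prod_mul_distrib, Finset.prod_const]
      rw [expand, Finset.powerset_univ]
      refine Finset.sum_congr rfl fun I _ => ?_
      rw [hprod I]
      congr 1
      by_cases h : ∀ j ∈ I, p.2 j < p.1 j
      · rw [if_pos h, indicator_of_mem (show p ∈ B2 I from ⟨hpC, h⟩), Pi.one_apply]
      · rw [if_neg h, indicator_of_notMem (fun hmem => h hmem.2)]
    · rw [indicator_of_notMem (fun hmem => hpC hmem.1), eq_comm]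
      refine Finset.sum_eq_zero fun I _ => ?_
      rw [indicator_of_notMem (fun hmem => hpC hmem.1), mul_zero]
  -- integrate
  have intB : ∀ I : Finset (Fin d), Integrable ((B2 I).indicator (1 : (Fin d → ℝ) × (Fin d → ℝ) → ℝ)) π :=
    fun I => (integrable_indicator_iff (mB2 I)).2
      (integrableOn_const (measure_ne_top _ _))
  have main : (π A2).toReal = ∑ I : Finset (Fin d), (-1:ℝ)^I.card * (π (B2 I)).toReal := by
    calc (π A2).toReal = ∫ p, A2.indicator (1 : (Fin d → ℝ) × (Fin d → ℝ) → ℝ) p ∂π :=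
          (integral_indicator_one mA2).symm
      _ = ∫ p, ∑ I : Finset (Fin d),
            (-1:ℝ)^I.card * (B2 I).indicator (1 : (Fin d → ℝ) × (Fin d → ℝ) → ℝ) p ∂π := by
          exact integral_congr_ae (ae_of_all _ key)
      _ = ∑ I : Finset (Fin d), ∫ p,
            (-1:ℝ)^I.card * (B2 I).indicator (1 : (Fin d → ℝ) × (Fin d → ℝ) → ℝ) p ∂π :=
          integral_finset_sum _ (fun I _ => (intB I).const_mul _)
      _ = ∑ I : Finset (Fin d), (-1:ℝ)^I.card * (π (B2 I)).toReal := by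
          refine Finset.sum_congr rfl fun I _ => ?_
          rw [integral_const_mul, integral_indicator_one (mB2 I)]
          rfl
  rw [hswap, hconc (Prod.swap ⁻¹' Ad d), hA2eq, main]
  refine Finset.sum_congr rfl fun I _ => ?_
  rw [hconc (Bd I), hB2eq I]

lemma lhs_piece (P Q : Measure (Fin d → ℝ)) [IsFiniteMeasure P] [IsFiniteMeasure Q] :
    IntegrableOn (fun x => (P (Icc 0 x)).toReal) (Sd d) Q ∧
    ∫ x in Sd d, (P (Icc 0 x)).toReal ∂Q = ((Q.prod P) (Ad d)).toReal :=
  setint Q P mS (fun x => Icc 0 x) (by exact mA)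

lemma rhs_piece (I : Finset (Fin d)) (P Q : Measure (Fin d → ℝ))
    [IsFiniteMeasure P] [IsFiniteMeasure Q] :
    IntegrableOn (fun y => (Q (TI I y)).toReal) (SI I) P ∧
    ∫ y in SI I, (Q (TI I y)).toReal ∂P = ((P.prod Q) (Bd I)).toReal :=
  setint P Q (mSI I) (TI I) (by exact mB I)

/-- Integration by parts for functions vanishing on the lower boundary (Proposition 3):
if `ν` assigns no mass to `[0,1]^d \ (0,1]^d`, then
`∫_{(0,1]^d} f_μ dν = Σ_{I ⊆ {1,…,d}} (−1)^{|I|} ∫_{(0_I,1_I]} f_ν(x_I−; 1_{−I}) dμ_{I,1}(x_I)`.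
The integral against the projection measure `μ_{I,1}` of a function of `x_I` is expressed as
the integral over `{y : y_I ∈ (0_I,1_I], y_j ≤ 1 (j ∉ I)}` against `μ` itself, and the partial
left limit `f_ν(x_I−; 1_{−I})` is `ν {z : z_j < x_j (j ∈ I), z_j ≤ 1 (j ∉ I)}`.  The term for
`I = ∅` is the constant `f_ν(1,…,1)` integrated over `{y ≤ 1}`, i.e. `f_μ(1,…,1)·f_ν(1,…,1)`. -/
theorem ibp_boundary_vanishing (d : ℕ) (hd : 1 ≤ d)
    (μ ν : MeasureTheory.SignedMeasure (Fin d → ℝ))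
    (hμ : ∀ E : Set (Fin d → ℝ), MeasurableSet E →
      E ⊆ (Set.Icc (0 : Fin d → ℝ) 1)ᶜ → μ E = 0)
    (hν : ∀ E : Set (Fin d → ℝ), MeasurableSet E →
      E ⊆ (Set.Icc (0 : Fin d → ℝ) 1)ᶜ → ν E = 0)
    (hν0 : ∀ E : Set (Fin d → ℝ), MeasurableSet E →
      E ⊆ Set.Icc (0 : Fin d → ℝ) 1 \ {y | ∀ j, y j ∈ Set.Ioc (0:ℝ) 1} → ν E = 0) :
    sInt ν {y | ∀ j, y j ∈ Set.Ioc (0:ℝ) 1} (fun x => μ (Set.Icc (0 : Fin d → ℝ) x)) =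
      ∑ I : Finset (Fin d),
        (-1 : ℝ) ^ I.card *
          sInt μ
            {y | (∀ j ∈ I, y j ∈ Set.Ioc (0:ℝ) 1) ∧ ∀ j ∉ I, y j ≤ 1}
            (fun y => ν {z | (∀ j ∈ I, z j < y j) ∧ ∀ j ∉ I, z j ≤ 1}) := by
  classical
  obtain ⟨hPp, hPm⟩ := jordan_null μ mK.compl hμ
  have hνS : ∀ E, MeasurableSet E → E ⊆ (Sd d)ᶜ → ν E = 0 := by
    intro E hE hsub
    have hsplit : E = (E ∩ Icc (0 : Fin d → ℝ) 1) ∪ (E \ Icc (0 : Fin d → ℝ) 1) :=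
      (inter_union_diff E _).symm
    have hdisj : Disjoint (E ∩ Icc (0 : Fin d → ℝ) 1) (E \ Icc (0 : Fin d → ℝ) 1) :=
      Set.disjoint_of_subset inter_subset_right (diff_subset_compl E _) disjoint_compl_right
    rw [hsplit, VectorMeasure.of_union hdisj (hE.inter mK) (hE.diff mK),
      hν0 _ (hE.inter mK) (fun x hx => ⟨hx.2, hsub hx.1⟩),
      hν _ (hE.diff mK) (diff_subset_compl E _), add_zero]
  obtain ⟨hQp, hQm⟩ := jordan_null ν mS.compl hνS
  set Pp := μ.toJordanDecomposition.posPart with hPpdef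
  set Pm := μ.toJordanDecomposition.negPart with hPmdef
  set Qp := ν.toJordanDecomposition.posPart with hQpdef
  set Qm := ν.toJordanDecomposition.negPart with hQmdef
  show sInt ν (Sd d) (fun x => μ (Icc 0 x))
      = ∑ I : Finset (Fin d), (-1:ℝ)^I.card * sInt μ (SI I) (fun y => ν (TI I y))
  have hf : (fun x : Fin d → ℝ => μ (Icc 0 x))
      = fun x => (Pp (Icc 0 x)).toReal - (Pm (Icc 0 x)).toReal :=
    funext fun x => signed_apply μ measurableSet_Icc
  have hg : ∀ I : Finset (Fin d), (fun y : Fin d → ℝ => ν (TI I y))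
      = fun y => (Qp (TI I y)).toReal - (Qm (TI I y)).toReal :=
    fun I => funext fun y => signed_apply ν (mTI I y)
  have hLQ : ∀ (Q : Measure (Fin d → ℝ)) [IsFiniteMeasure Q],
      ∫ x in Sd d, ((Pp (Icc 0 x)).toReal - (Pm (Icc 0 x)).toReal) ∂Q
        = ((Q.prod Pp) (Ad d)).toReal - ((Q.prod Pm) (Ad d)).toReal := by
    intro Q _
    rw [integral_sub (lhs_piece Pp Q).1 (lhs_piece Pm Q).1,
      (lhs_piece Pp Q).2, (lhs_piece Pm Q).2]
  have hRP : ∀ (I : Finset (Fin d)) (P : Measure (Fin d → ℝ)) [IsFiniteMeasure P],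
      ∫ y in SI I, ((Qp (TI I y)).toReal - (Qm (TI I y)).toReal) ∂P
        = ((P.prod Qp) (Bd I)).toReal - ((P.prod Qm) (Bd I)).toReal := by
    intro I P _
    rw [integral_sub (rhs_piece I P Qp).1 (rhs_piece I P Qm).1,
      (rhs_piece I P Qp).2, (rhs_piece I P Qm).2]
  have hL : sInt ν (Sd d) (fun x => μ (Icc 0 x))
      = (((Qp.prod Pp) (Ad d)).toReal - ((Qp.prod Pm) (Ad d)).toReal)
        - (((Qm.prod Pp) (Ad d)).toReal - ((Qm.prod Pm) (Ad d)).toReal) := by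
    rw [sInt, hf, hLQ Qp, hLQ Qm]
  have hR : ∀ I : Finset (Fin d), sInt μ (SI I) (fun y => ν (TI I y))
      = (((Pp.prod Qp) (Bd I)).toReal - ((Pp.prod Qm) (Bd I)).toReal)
        - (((Pm.prod Qp) (Bd I)).toReal - ((Pm.prod Qm) (Bd I)).toReal) := by
    intro I
    rw [sInt, hg I, hRP I Pp, hRP I Pm]
  rw [hL, core Pp Qp hPp hQp, core Pm Qp hPm hQp, core Pp Qm hPp hQm, core Pm Qm hPm hQm]
  simp only [hR]
  rw [← Finset.sum_sub_distrib, ← Finset.sum_sub_distrib, ← Finset.sum_sub_distrib]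
  refine Finset.sum_congr rfl fun I _ => ?_
  ring
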